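/- If R is a weak nil clean ring, then the Jacobson radical J(R) is contained in the set of nilpotent elements of R. -/

import Mathlib

/-- If `R` is a weak nil clean ring, then `J(R)` consists of nilpotents. -/
theorem jacobson_nil_of_weakNilClean {R : Type*} [Ring R]
    (h : ∀ x : R, ∃ e n : R, IsIdempotentElem e ∧ IsNilpotent n ∧ (x = e + n ∨ x = -e + n)) :
    ∀ x ∈ (⊥ : Ideal R).jacobson, IsNilpotent x := by
  intro x hx
  obtain ⟨e, n, he, hn, hcase⟩ := h x
  set J := (⊥ : Ideal R).jacobson with hJ
  -- J is a two-sided ideal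
  have hright : ∀ {a b : R}, a ∈ J → a * b ∈ J := by
    intro a b ha
    exact J.mul_mem_right b ha
  -- key: congruences mod J can be raised to powers
  have key : ∀ a b : R, a - b ∈ J → ∀ k : ℕ, a ^ k - b ^ k ∈ J := by
    intro a b hab k
    induction k with
    | zero => simp
    | succ k ih =>
      have hid : a ^ (k + 1) - b ^ (k + 1) = a ^ k * (a - b) + (a ^ k - b ^ k) * b := by
        rw [pow_succ, pow_succ]
        noncomm_ring
      rw [hid]
      exact J.add_mem (Ideal.mul_mem_left _ _ hab) (hright ih)
  obtain ⟨k, hk⟩ := hn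
  rcases Nat.eq_zero_or_pos k with hk0 | hkpos
  · -- trivial ring case
    subst hk0
    simp only [pow_zero] at hk
    refine ⟨1, ?_⟩
    rw [pow_one, ← mul_one x, hk, mul_zero]
  have hek : e ^ k = e := by
    rcases Nat.exists_eq_add_of_lt hkpos with ⟨m, hm⟩
    rw [show k = m + 1 by omega]
    exact he.pow_succ_eq m
  -- show e ∈ J
  have heJ : e ∈ J := by
    rcases hcase with hc | hc
    · have hediff : e - (-n) ∈ J := by
        have h1 : e - -n = x := by rw [hc, sub_neg_eq_add]
        rwa [h1]
      have h2 := key _ _ hediff k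
      rw [neg_pow, hk, mul_zero, sub_zero, hek] at h2
      exact h2
    · have hediff : e - n ∈ J := by
        have h1 : e - n = -x := by rw [hc]; abel
        rw [h1]
        exact J.neg_mem hx
      have h2 := key _ _ hediff k
      rwa [hk, sub_zero, hek] at h2
  -- an idempotent in the Jacobson radical is zero
  have he0 : e = 0 := by
    obtain ⟨z, hz⟩ := Ideal.mem_jacobson_iff.1 heJ (-1)
    rw [Ideal.mem_bot] at hz
    have h1 : z - z * e = 1 := by
      have h2 : z - z * e - 1 = 0 := by
        rw [show z - z * e - 1 = z * (-1) * e + z - 1 from by noncomm_ring, hz]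
      exact sub_eq_zero.mp h2
    have h3 : (z - z * e) * e = 0 := by rw [sub_mul, mul_assoc, he.eq, sub_self]
    rwa [h1, one_mul] at h3
  rcases hcase with hc | hc
  · rw [hc, he0, zero_add]; exact ⟨k, hk⟩
  · rw [hc, he0, neg_zero, zero_add]; exact ⟨k, hk⟩
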